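/- Let u: Z = ∏ᵢ₌₁ⁿ Zᵢ → [0,1]ⁿ be an n-player game with compacta Zᵢ and continuous payoff functions uᵢ, let ⋆ and ∗ be continuous t-norms, and consider the game in possibility-capacity strategies with expected payoffs euᵢ(ν₁,…,νₙ) = ∫_Z^{∨⋆} uᵢ d(ν₁ ⊛ … ⊛ νₙ), the tensor product generated by ∗. Let μᵢ ∈ M_∪Zᵢ be the greatest element, i.e. μᵢ(A) = 1 for every nonempty closed A ⊆ Zᵢ. Then (μ₁,…,μₙ) is a Nash equilibrium: for every player i and every νᵢ ∈ M_∪Zᵢ, euᵢ(μ₁,…,νᵢ,…,μₙ) ≤ euᵢ(μ₁,…,μᵢ,…,μₙ). -/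

import Mathlib

open Set TopologicalSpace

universe u v

/-- A (upper-semicontinuous) capacity on a topological space `X`:
a normalized monotone set function on the closed subsets, upper semicontinuous
in the sense of Zarichnyi–Nykyforchyn. -/
structure Capacity (X : Type u) [TopologicalSpace X] : Type u where
  toFun : Closeds X → ℝ
  empty' : toFun ⊥ = 0
  univ' : toFun ⊤ = 1
  mono' : ∀ F G : Closeds X, F ≤ G → toFun F ≤ toFun G
  usc' : ∀ (F : Closeds X) (a : ℝ), toFun F < a →
    ∃ O : Set X, IsOpen O ∧ (F : Set X) ⊆ O ∧ ∀ B : Closeds X, (B : Set X) ⊆ O → toFun B < a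

namespace Capacity

variable {X : Type u} [TopologicalSpace X]

/-- Value of a capacity on (the closure of) an arbitrary set; on closed sets this is
the value of the capacity. -/
def cval (ν : Capacity X) (A : Set X) : ℝ := ν.toFun ⟨closure A, isClosed_closure⟩

/-- The sup-extension of a capacity to open sets:
`ν(U) = sup {ν K : K closed, K ⊆ U}`. -/
noncomputable def oval (ν : Capacity X) (U : Set X) : ℝ :=
  sSup {r : ℝ | ∃ K : Closeds X, (K : Set X) ⊆ U ∧ ν.toFun K = r}

end Capacity

/-- The topology on the space `MX` of capacities, generated by the subbase
`O₋(F,a) = {c : c(F) < a}` (`F` closed) and `O₊(U,a) = {c : c(U) > a}` (`U` open). -/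
instance capacityTopology (X : Type u) [TopologicalSpace X] : TopologicalSpace (Capacity X) :=
  TopologicalSpace.generateFrom
    ({S | ∃ (F : Closeds X) (a : ℝ), a ∈ Icc (0:ℝ) 1 ∧
        S = {c : Capacity X | c.toFun F < a}} ∪
     {S | ∃ U : Set X, IsOpen U ∧ ∃ a ∈ Icc (0:ℝ) 1,
        S = {c : Capacity X | a < c.oval U}})

/-- A possibility capacity: `ν(A ∪ B) = max (ν A) (ν B)` on closed sets. -/
def IsPossibility {X : Type u} [TopologicalSpace X] (ν : Capacity X) : Prop :=
  ∀ A B : Closeds X, ν.toFun (A ⊔ B) = max (ν.toFun A) (ν.toFun B)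

/-- A necessity capacity: `ν(A ∩ B) = min (ν A) (ν B)` on closed sets. -/
def IsNecessity {X : Type u} [TopologicalSpace X] (ν : Capacity X) : Prop :=
  ∀ A B : Closeds X, ν.toFun (A ⊓ B) = min (ν.toFun A) (ν.toFun B)

/-- A triangular norm on `[0,1]`. -/
structure Tnorm : Type where
  toFun : ℝ → ℝ → ℝ
  mem' : ∀ s ∈ Icc (0:ℝ) 1, ∀ t ∈ Icc (0:ℝ) 1, toFun s t ∈ Icc (0:ℝ) 1
  comm' : ∀ s ∈ Icc (0:ℝ) 1, ∀ t ∈ Icc (0:ℝ) 1, toFun s t = toFun t s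
  assoc' : ∀ s ∈ Icc (0:ℝ) 1, ∀ t ∈ Icc (0:ℝ) 1, ∀ r ∈ Icc (0:ℝ) 1,
    toFun (toFun s t) r = toFun s (toFun t r)
  mono' : ∀ s₁ ∈ Icc (0:ℝ) 1, ∀ s₂ ∈ Icc (0:ℝ) 1, ∀ t₁ ∈ Icc (0:ℝ) 1, ∀ t₂ ∈ Icc (0:ℝ) 1,
    s₁ ≤ s₂ → t₁ ≤ t₂ → toFun s₁ t₁ ≤ toFun s₂ t₂
  one' : ∀ s ∈ Icc (0:ℝ) 1, toFun s 1 = s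

/-- Continuity of a t-norm (on the unit square). -/
def Tnorm.Cont (star : Tnorm) : Prop :=
  ContinuousOn (fun q : ℝ × ℝ => star.toFun q.1 q.2) (Icc 0 1 ×ˢ Icc 0 1)

/-- The t-normed (fuzzy) integral `∫^{∨∗} f dν = sup { ν(f⁻¹[t,1]) ∗ t : t ∈ [0,1] }`. -/
noncomputable def tInt {X : Type u} [TopologicalSpace X] (star : Tnorm) (ν : Capacity X) (f : X → ℝ) : ℝ :=
  sSup {r : ℝ | ∃ t ∈ Icc (0:ℝ) 1, r = star.toFun (ν.cval (f ⁻¹' Icc t 1)) t}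
/-- The iterated product of a list of reals under a t-norm (empty product is `1`,
the neutral element). -/
def Tnorm.listProd (ast : Tnorm) : List ℝ → ℝ
  | [] => 1
  | a :: l => ast.toFun a (ast.listProd l)
/-- `IsPossTensorAll ast μ τ` says that `τ ∈ M_∪(∏ Zⱼ)` is the tensor product
`ν₁ ⊛ … ⊛ νₙ` generated by the t-norm `ast` of the possibility capacities `μ j`:
the possibility capacity with density `[⊛ μ](z) = ∗ⱼ [μⱼ](zⱼ)`. -/
def IsPossTensorAll {n : ℕ} {Z : Fin n → Type u} [∀ j, TopologicalSpace (Z j)]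
    (ast : Tnorm) (μ : ∀ j, Capacity (Z j)) (τ : Capacity (∀ j, Z j)) : Prop :=
  ∀ B : Set (∀ j, Z j), IsClosed B →
    τ.cval B = sSup ((fun z : ∀ j, Z j =>
      ast.listProd ((List.finRange n).map fun j => (μ j).cval {z j})) '' B)

lemma Capacity.cval_mem {X : Type u} [TopologicalSpace X] (ν : Capacity X) (A : Set X) :
    ν.cval A ∈ Icc (0:ℝ) 1 := by
  constructor
  · rw [← ν.empty']; exact ν.mono' _ _ bot_le
  · rw [← ν.univ']; exact ν.mono' _ _ le_top

lemma Tnorm.listProd_mem (ast : Tnorm) (l : List ℝ) (h : ∀ a ∈ l, a ∈ Icc (0:ℝ) 1) :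
    ast.listProd l ∈ Icc (0:ℝ) 1 := by
  induction l with
  | nil => exact ⟨zero_le_one, le_refl 1⟩
  | cons a l ih =>
    exact ast.mem' a (h a (List.mem_cons_self)) _
      (ih fun b hb => h b (List.mem_cons_of_mem a hb))

lemma Tnorm.listProd_ones (ast : Tnorm) (l : List ℝ) (h : ∀ a ∈ l, a = (1:ℝ)) :
    ast.listProd l = 1 := by
  induction l with
  | nil => rfl
  | cons a l ih =>
    have ha := h a (List.mem_cons_self)
    have hl := ih fun b hb => h b (List.mem_cons_of_mem a hb)
    simp only [Tnorm.listProd, ha, hl]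
    exact ast.one' 1 ⟨zero_le_one, le_refl 1⟩

/-- in the game in possibility-capacity strategies with expected payoffs
`euᵢ(ν₁,…,νₙ) = ∫^{∨⋆} uᵢ d(ν₁ ⊛ … ⊛ νₙ)` (tensor product generated by `∗`), the
profile of greatest elements `μᵢ` of `M_∪Zᵢ` (i.e. `μᵢ(A) = 1` for every nonempty
closed `A`) is a Nash equilibrium. -/
theorem greatest_elements_nash {n : ℕ} (Z : Fin n → Type u)
    [∀ j, TopologicalSpace (Z j)] [∀ j, CompactSpace (Z j)] [∀ j, T2Space (Z j)]
    (u : (∀ j, Z j) → Fin n → ℝ) (hu : Continuous u)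
    (hu01 : ∀ z j, u z j ∈ Icc (0:ℝ) 1)
    (star ast : Tnorm) (hstar : star.Cont) (hast : ast.Cont)
    (μ : ∀ j, Capacity (Z j))
    (hμ : ∀ j, ∀ A : Set (Z j), IsClosed A → A.Nonempty → (μ j).cval A = 1) :
    ∀ i : Fin n, ∀ ν : Capacity (Z i), IsPossibility ν →
      ∀ τ' : Capacity (∀ j, Z j), IsPossTensorAll ast (Function.update μ i ν) τ' →
      ∀ τ : Capacity (∀ j, Z j), IsPossTensorAll ast μ τ →
        tInt star τ' (fun z => u z i) ≤ tInt star τ (fun z => u z i) := by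
  
  intro i ν hν τ' hτ' τ hτ
  have hf : Continuous (fun z : ∀ j, Z j => u z i) := (continuous_apply i).comp hu
  -- key: for closed B, τ'.cval B ≤ τ.cval B
  have key : ∀ B : Set (∀ j, Z j), IsClosed B → τ'.cval B ≤ τ.cval B := by
    intro B hB
    rw [hτ' B hB, hτ B hB]
    rcases B.eq_empty_or_nonempty with rfl | ⟨z, hz⟩
    · simp
    · have hτB : (1:ℝ) ≤ sSup ((fun z : ∀ j, Z j =>
          ast.listProd ((List.finRange n).map fun j => (μ j).cval {z j})) '' B) := by
        apply le_csSup
        · refine ⟨1, ?_⟩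
          rintro r ⟨w, _, rfl⟩
          exact (ast.listProd_mem _ (by
            intro a ha
            rw [List.mem_map] at ha
            obtain ⟨j, _, rfl⟩ := ha
            exact Capacity.cval_mem _ _)).2
        · refine ⟨z, hz, ?_⟩
          apply ast.listProd_ones
          intro a ha
          rw [List.mem_map] at ha
          obtain ⟨j, _, rfl⟩ := ha
          exact hμ j {z j} isClosed_singleton ⟨z j, rfl⟩
      refine le_trans ?_ hτB
      apply Real.sSup_le _ zero_le_one
      rintro r ⟨w, _, rfl⟩
      exact (ast.listProd_mem _ (by
        intro a ha
        rw [List.mem_map] at ha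
        obtain ⟨j, _, rfl⟩ := ha
        exact Capacity.cval_mem _ _)).2
  -- RHS integral set is bounded above and nonempty with nonneg elements
  set S := {r : ℝ | ∃ t ∈ Icc (0:ℝ) 1, r = star.toFun (τ.cval ((fun z => u z i) ⁻¹' Icc t 1)) t}
  have hSbdd : BddAbove S := by
    refine ⟨1, ?_⟩
    rintro r ⟨t, ht, rfl⟩
    exact (star.mem' _ (Capacity.cval_mem _ _) t ht).2
  have hS0 : (0:ℝ) ≤ sSup S := by
    have hmem : star.toFun (τ.cval ((fun z => u z i) ⁻¹' Icc 0 1)) 0 ∈ S :=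
      ⟨0, ⟨le_refl 0, zero_le_one⟩, rfl⟩
    exact le_trans (star.mem' _ (Capacity.cval_mem _ _) 0 ⟨le_refl 0, zero_le_one⟩).1
      (le_csSup hSbdd hmem)
  apply Real.sSup_le _ hS0
  rintro r ⟨t, ht, rfl⟩
  have hcl : IsClosed ((fun z : ∀ j, Z j => u z i) ⁻¹' Icc t 1) := isClosed_Icc.preimage hf
  have h1 : star.toFun (τ'.cval ((fun z => u z i) ⁻¹' Icc t 1)) t ≤
      star.toFun (τ.cval ((fun z => u z i) ⁻¹' Icc t 1)) t :=
    star.mono' _ (Capacity.cval_mem _ _) _ (Capacity.cval_mem _ _) _ ht _ ht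
      (key _ hcl) (le_refl t)
  exact le_trans h1 (le_csSup hSbdd ⟨t, ht, rfl⟩)
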